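/- For an n-ary multiplicative Hom-Nambu-Lie superalgebra g, the space Der(g) = ⊕_{k≥0} Der_{α^k}(g) with the supercommutator bracket [D,D'] = D∘D' − (−1)^{|D||D'|} D'∘D is a Lie superalgebra. -/

import Mathlib

set_option linter.unusedSectionVars false
open Finset

section helpers
variable {K V : Type*} [Field K] [AddCommGroup V] [Module K V]

lemma sign_add (a b : ZMod 2) :
    ((-1:K)^(a+b).val) = (-1)^a.val * (-1)^b.val := by
  rcases (by decide : ∀ x : ZMod 2, x = 0 ∨ x = 1) a with rfl | rfl <;> rcases (by decide : ∀ x : ZMod 2, x = 0 ∨ x = 1) b with rfl | rfl <;> norm_num [show (2:ZMod 2).val = 0 from rfl,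
    show (1:ZMod 2).val = 1 from rfl, show (0:ZMod 2).val = 0 from rfl]

lemma sign_sq (a : ZMod 2) :
    ((-1:K)^a.val) * ((-1:K)^a.val) = 1 := by
  rcases (by decide : ∀ x : ZMod 2, x = 0 ∨ x = 1) a with rfl | rfl <;> norm_num [show (1:ZMod 2).val = 1 from rfl, show (0:ZMod 2).val = 0 from rfl]

lemma sign_two {K : Type*} [Field K] (a : ZMod 2) : ((-1:K))^(a.val*2) = 1 := by
  rw [pow_mul]
  rcases (by decide : ∀ x : ZMod 2, x = 0 ∨ x = 1) a with rfl | rfl <;> norm_num [show (1:ZMod 2).val = 1 from rfl, show (0:ZMod 2).val = 0 from rfl]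

lemma zmod2_self (x : ZMod 2) : x + x = 0 := by fin_cases x <;> rfl

lemma pow_comm_of_comm (α : V →ₗ[K] V) (D : V → V)
    (hc : ∀ v, D (α v) = α (D v)) (k : ℕ) (v : V) : D ((α^k) v) = (α^k) (D v) := by
  induction k with
  | zero => simp
  | succ n ih => rw [pow_succ', Module.End.mul_apply, Module.End.mul_apply, hc, ih]

lemma pow_mem' {gr : ZMod 2 → Submodule K V} {α : V →ₗ[K] V}
    (hα : ∀ (d : ZMod 2), ∀ v ∈ gr d, α v ∈ gr d)
    (k : ℕ) (d : ZMod 2) (v : V) (hv : v ∈ gr d) : (α^k) v ∈ gr d := by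
  induction k with
  | zero => simpa
  | succ n ih => rw [pow_succ', Module.End.mul_apply]; exact hα _ _ ih

lemma pow_add_apply (α : V →ₗ[K] V) (a b : ℕ) (v : V) : (α^(a+b)) v = (α^a) ((α^b) v) := by
  rw [pow_add]; rfl

lemma update_congr {n : ℕ} {f g : Fin n → V} (i : Fin n) (v : V) (hfg : ∀ j, j ≠ i → f j = g j) :
    Function.update f i v = Function.update g i v := by
  funext j
  rcases eq_or_ne j i with rfl | hj
  · simp
  · rw [Function.update_of_ne hj, Function.update_of_ne hj, hfg j hj]

lemma sum_filter_update {m : ℕ} (d : Fin (m+1) → ZMod 2) (i l : Fin (m+1)) (e : ZMod 2) :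
    (∑ j ∈ univ.filter (fun j => j < l), Function.update d i (e + d i) j)
      = (if i < l then e else 0) + ∑ j ∈ univ.filter (fun j => j < l), d j := by
  have h1 : Function.update d i (e + d i) = fun j => (if j = i then e else 0) + d j := by
    funext j
    rcases eq_or_ne j i with rfl | hj
    · simp
    · simp [Function.update_of_ne hj, hj]
  rw [h1, Finset.sum_add_distrib]
  congr 1
  rw [Finset.sum_ite_eq' (univ.filter (fun j => j < l)) i (fun _ => e)]
  simp

end helpers
structure IsHNLS (K : Type*) {V : Type*} [Field K] [AddCommGroup V] [Module K V]
    (m : ℕ) (gr : ZMod 2 → Submodule K V)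
    (br : MultilinearMap K (fun _ : Fin (m + 1) => V) V)
    (α : V →ₗ[K] V) : Prop where
  even_alpha : ∀ (d : ZMod 2), ∀ v ∈ gr d, α v ∈ gr d
  even_br : ∀ (d : Fin (m + 1) → ZMod 2) (x : Fin (m + 1) → V),
      (∀ i, x i ∈ gr (d i)) → br x ∈ gr (∑ i, d i)
  skew : ∀ (d : Fin (m + 1) → ZMod 2) (x : Fin (m + 1) → V),
      (∀ i, x i ∈ gr (d i)) → ∀ i j : Fin (m + 1), (i : ℕ) + 1 = (j : ℕ) →
      br x = -((-1 : K) ^ (d i * d j).val) • br (x ∘ Equiv.swap i j)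
  mult : ∀ x : Fin (m + 1) → V, α (br x) = br fun i => α (x i)
  jacobi : ∀ (dx : Fin m → ZMod 2) (dy : Fin (m + 1) → ZMod 2)
      (x : Fin m → V) (y : Fin (m + 1) → V),
      (∀ i, x i ∈ gr (dx i)) → (∀ i, y i ∈ gr (dy i)) →
      br (Fin.snoc (fun i => α (x i)) (br y)) =
        ∑ i : Fin (m + 1),
          ((-1 : K) ^ (((∑ j, dx j) * ∑ j ∈ univ.filter (fun j => j < i), dy j).val)) •
            br (Function.update (fun j => α (y j)) i (br (Fin.snoc x (y i))))

/-- `D` is an `α^k`-derivation of homogeneous degree `dD` of the `(m+1)`-ary multiplicative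
Hom-Nambu-Lie superalgebra `(V, gr, br, α)`. -/
def IsAlphaDer {K V : Type*} [Field K] [AddCommGroup V] [Module K V] (m : ℕ)
    (gr : ZMod 2 → Submodule K V)
    (br : MultilinearMap K (fun _ : Fin (m + 1) => V) V)
    (α : V →ₗ[K] V) (k : ℕ) (dD : ZMod 2) (D : V → V) : Prop :=
  IsLinearMap K D ∧ (∀ v, D (α v) = α (D v)) ∧
    (∀ (d : ZMod 2), ∀ v ∈ gr d, D v ∈ gr (dD + d)) ∧
    ∀ (d : Fin (m + 1) → ZMod 2) (x : Fin (m + 1) → V), (∀ i, x i ∈ gr (d i)) →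
      D (br x) = ∑ i : Fin (m + 1),
        ((-1 : K) ^ ((dD * ∑ j ∈ univ.filter (fun j => j < i), d j).val)) •
          br (Function.update (fun j => (α ^ k) (x j)) i (D (x i)))

/-- The supercommutator of two maps of homogeneous degrees `da`, `db`. -/
def sComm (K : Type*) {V : Type*} [Field K] [AddCommGroup V] [Module K V]
    (da db : ZMod 2) (A B : V → V) : V → V :=
  fun v => A (B v) - ((-1 : K) ^ ((da * db).val)) • B (A v)


lemma sign_congr {K : Type*} [Field K] (a b : ZMod 2) (hab : a = b) :
    ((-1:K)^a.val) = (-1)^b.val := by rw [hab]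

lemma leibniz_sComm {K V : Type*} [Field K] [AddCommGroup V] [Module K V] {m : ℕ}
    {gr : ZMod 2 → Submodule K V}
    {br : MultilinearMap K (fun _ : Fin (m + 1) => V) V}
    {α : V →ₗ[K] V} (h : IsHNLS K m gr br α)
    {k k' : ℕ} {dD dD' : ZMod 2} {D D' : V → V}
    (hD : IsAlphaDer m gr br α k dD D) (hD' : IsAlphaDer m gr br α k' dD' D')
    (d : Fin (m + 1) → ZMod 2) (x : Fin (m + 1) → V) (hx : ∀ i, x i ∈ gr (d i)) :
    sComm K dD dD' D D' (br x) = ∑ i : Fin (m + 1),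
        ((-1 : K) ^ (((dD + dD') * ∑ j ∈ univ.filter (fun j => j < i), d j).val)) •
          br (Function.update (fun j => (α ^ (k + k')) (x j)) i (sComm K dD dD' D D' (x i))) := by
  classical
  have hy : ∀ i j, Function.update (fun j => (α ^ k') (x j)) i (D' (x i)) j
      ∈ gr (Function.update d i (dD' + d i) j) := by
    intro i j
    rcases eq_or_ne j i with rfl | hj
    · simpa using hD'.2.2.1 (d j) (x j) (hx j)
    · rw [Function.update_of_ne hj, Function.update_of_ne hj]
      exact pow_mem' h.even_alpha k' (d j) (x j) (hx j)
  have hw : ∀ l j, Function.update (fun j => (α ^ k) (x j)) l (D (x l)) j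
      ∈ gr (Function.update d l (dD + d l) j) := by
    intro l j
    rcases eq_or_ne j l with rfl | hj
    · simpa using hD.2.2.1 (d j) (x j) (hx j)
    · rw [Function.update_of_ne hj, Function.update_of_ne hj]
      exact pow_mem' h.even_alpha k (d j) (x j) (hx j)
  have hDsum : ∀ (f : Fin (m+1) → V), D (∑ i, f i) = ∑ i, D (f i) :=
    fun f => map_sum (IsLinearMap.mk' D hD.1) f univ
  have hD'sum : ∀ (f : Fin (m+1) → V), D' (∑ i, f i) = ∑ i, D' (f i) :=
    fun f => map_sum (IsLinearMap.mk' D' hD'.1) f univ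
  have hL : D (D' (br x)) = ∑ i : Fin (m+1), ∑ l : Fin (m+1),
      (((-1 : K) ^ ((dD' * ∑ j ∈ univ.filter (fun j => j < i), d j).val)) *
        ((-1 : K) ^ ((dD * ((if i < l then dD' else 0) +
            ∑ j ∈ univ.filter (fun j => j < l), d j)).val))) •
        br (Function.update
          (fun j => (α ^ k) (Function.update (fun j' => (α ^ k') (x j')) i (D' (x i)) j)) l
          (D (Function.update (fun j' => (α ^ k') (x j')) i (D' (x i)) l))) := by
    rw [hD'.2.2.2 d x hx, hDsum]
    refine Finset.sum_congr rfl fun i _ => ?_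
    rw [hD.1.map_smul,
      hD.2.2.2 (Function.update d i (dD' + d i)) _ (hy i), Finset.smul_sum]
    refine Finset.sum_congr rfl fun l _ => ?_
    rw [smul_smul, sum_filter_update]
  have hR : D' (D (br x)) = ∑ l : Fin (m+1), ∑ i : Fin (m+1),
      (((-1 : K) ^ ((dD * ∑ j ∈ univ.filter (fun j => j < l), d j).val)) *
        ((-1 : K) ^ ((dD' * ((if l < i then dD else 0) +
            ∑ j ∈ univ.filter (fun j => j < i), d j)).val))) •
        br (Function.update
          (fun j => (α ^ k') (Function.update (fun j' => (α ^ k) (x j')) l (D (x l)) j)) i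
          (D' (Function.update (fun j' => (α ^ k) (x j')) l (D (x l)) i))) := by
    rw [hD.2.2.2 d x hx, hD'sum]
    refine Finset.sum_congr rfl fun l _ => ?_
    rw [hD'.1.map_smul,
      hD'.2.2.2 (Function.update d l (dD + d l)) _ (hw l), Finset.smul_sum]
    refine Finset.sum_congr rfl fun i _ => ?_
    rw [smul_smul, sum_filter_update]
  simp only [sComm]
  rw [hL, hR, Finset.smul_sum]
  simp only [Finset.smul_sum]
  conv_lhs => enter [2]; rw [Finset.sum_comm]
  rw [← Finset.sum_sub_distrib]
  refine Finset.sum_congr rfl fun i _ => ?_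
  rw [← Finset.sum_sub_distrib]
  refine (Finset.sum_eq_single i ?_ ?_).trans ?_
  · -- off-diagonal cancellation
    intro l _ hl
    rw [smul_smul]
    have hveq : (Function.update
          (fun j => (α ^ k) (Function.update (fun j' => (α ^ k') (x j')) i (D' (x i)) j)) l
          (D (Function.update (fun j' => (α ^ k') (x j')) i (D' (x i)) l)))
        = (Function.update
          (fun j => (α ^ k') (Function.update (fun j' => (α ^ k) (x j')) l (D (x l)) j)) i
          (D' (Function.update (fun j' => (α ^ k) (x j')) l (D (x l)) i))) := by
      funext j
      rcases eq_or_ne j l with rfl | hjl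
      · rw [Function.update_self, Function.update_of_ne hl, Function.update_of_ne hl,
          Function.update_self, pow_comm_of_comm α D hD.2.1 k']
      · rcases eq_or_ne j i with rfl | hji
        · rw [Function.update_of_ne hjl, Function.update_self, Function.update_self,
            Function.update_of_ne hjl, pow_comm_of_comm α D' hD'.2.1 k]
        · rw [Function.update_of_ne hjl, Function.update_of_ne hji,
            Function.update_of_ne hji, Function.update_of_ne hjl,
            ← pow_add_apply, ← pow_add_apply, add_comm k' k]
    rw [hveq, ← sub_smul]
    have hczero : ((-1 : K) ^ ((dD' * ∑ j ∈ univ.filter (fun j => j < i), d j).val)) *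
        ((-1 : K) ^ ((dD * ((if i < l then dD' else 0) +
            ∑ j ∈ univ.filter (fun j => j < l), d j)).val)) -
        ((-1 : K) ^ ((dD * dD').val)) *
        (((-1 : K) ^ ((dD * ∑ j ∈ univ.filter (fun j => j < l), d j).val)) *
        ((-1 : K) ^ ((dD' * ((if l < i then dD else 0) +
            ∑ j ∈ univ.filter (fun j => j < i), d j)).val))) = 0 := by
      rw [sub_eq_zero, ← sign_add, ← sign_add, ← sign_add]
      refine sign_congr _ _ ?_
      rcases lt_or_gt_of_ne hl with h1 | h1
      · rw [if_neg (asymm h1), if_pos h1]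
        linear_combination -zmod2_self (dD * dD')
      · rw [if_pos h1, if_neg (asymm h1)]
        ring
    rw [hczero, zero_smul]
  · intro hmem
    exact absurd (Finset.mem_univ i) hmem
  · -- diagonal
    rw [if_neg (lt_irrefl i), if_neg (lt_irrefl i), zero_add]
    have hA : (Function.update
          (fun j => (α ^ k) (Function.update (fun j' => (α ^ k') (x j')) i (D' (x i)) j)) i
          (D (Function.update (fun j' => (α ^ k') (x j')) i (D' (x i)) i)))
        = Function.update (fun j => (α ^ (k + k')) (x j)) i (D (D' (x i))) := by
      rw [Function.update_self]
      refine update_congr i _ fun j hj => ?_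
      rw [Function.update_of_ne hj, ← pow_add_apply]
    have hB : (Function.update
          (fun j => (α ^ k') (Function.update (fun j' => (α ^ k) (x j')) i (D (x i)) j)) i
          (D' (Function.update (fun j' => (α ^ k) (x j')) i (D (x i)) i)))
        = Function.update (fun j => (α ^ (k + k')) (x j)) i (D' (D (x i))) := by
      rw [Function.update_self]
      refine update_congr i _ fun j hj => ?_
      rw [Function.update_of_ne hj, ← pow_add_apply, add_comm k' k]
    rw [hA, hB, MultilinearMap.map_update_sub, MultilinearMap.map_update_smul, smul_sub]
    simp only [smul_smul]
    have hc1 : ((-1 : K) ^ ((dD' * ∑ j ∈ univ.filter (fun j => j < i), d j).val)) *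
        ((-1 : K) ^ ((dD * ∑ j ∈ univ.filter (fun j => j < i), d j).val)) =
        ((-1 : K) ^ (((dD + dD') * ∑ j ∈ univ.filter (fun j => j < i), d j).val)) := by
      rw [← sign_add]
      exact sign_congr _ _ (by ring)
    have hc2 : ((-1 : K) ^ ((dD * dD').val)) *
        (((-1 : K) ^ ((dD * ∑ j ∈ univ.filter (fun j => j < i), d j).val)) *
        ((-1 : K) ^ ((dD' * ∑ j ∈ univ.filter (fun j => j < i), d j).val))) =
        ((-1 : K) ^ (((dD + dD') * ∑ j ∈ univ.filter (fun j => j < i), d j).val)) *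
        ((-1 : K) ^ ((dD * dD').val)) := by
      rw [← sign_add, ← sign_add, ← sign_add]
      exact sign_congr _ _ (by ring)
    rw [hc1, hc2]

/-- Proposition 2.4 (first part): `Der(g) = ⊕ₖ Der_{αᵏ}(g)` is a Lie superalgebra under the
supercommutator: it is closed under the bracket, which is super-skew-symmetric and satisfies
the super Jacobi identity on homogeneous derivations. -/
theorem der_lie_superalgebra {K V : Type*} [Field K] [AddCommGroup V] [Module K V] (m : ℕ)
    (gr : ZMod 2 → Submodule K V)
    (br : MultilinearMap K (fun _ : Fin (m + 1) => V) V)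
    (α : V →ₗ[K] V) (h : IsHNLS K m gr br α)
    (k k' k'' : ℕ) (dD dD' dD'' : ZMod 2) (D D' D'' : V → V)
    (hD : IsAlphaDer m gr br α k dD D) (hD' : IsAlphaDer m gr br α k' dD' D')
    (hD'' : IsAlphaDer m gr br α k'' dD'' D'') :
    IsAlphaDer m gr br α (k + k') (dD + dD') (sComm K dD dD' D D') ∧
    (sComm K dD dD' D D' = fun v => -(((-1 : K) ^ ((dD * dD').val)) • sComm K dD' dD D' D v)) ∧
    (sComm K dD (dD' + dD'') D (sComm K dD' dD'' D' D'') = fun v =>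
      sComm K (dD + dD') dD'' (sComm K dD dD' D D') D'' v +
        ((-1 : K) ^ ((dD * dD').val)) • sComm K dD' (dD + dD'') D' (sComm K dD dD'' D D'') v) := by
  have Dsub : ∀ a b, D (a - b) = D a - D b := fun a b => hD.1.map_sub a b
  have D'sub : ∀ a b, D' (a - b) = D' a - D' b := fun a b => hD'.1.map_sub a b
  have D''sub : ∀ a b, D'' (a - b) = D'' a - D'' b := fun a b => hD''.1.map_sub a b
  refine ⟨⟨⟨?_, ?_⟩, ?_, ?_, ?_⟩, ?_, ?_⟩
  · intro a b
    simp only [sComm, hD.1.map_add, hD'.1.map_add, smul_add]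
    abel
  · intro r a
    simp only [sComm, hD.1.map_smul, hD'.1.map_smul, smul_sub, smul_smul, mul_comm]
  · intro v
    simp only [sComm, hD.2.1, hD'.2.1, map_sub, map_smul]
  · intro d v hv
    have h1 := hD.2.2.1 _ _ (hD'.2.2.1 d v hv)
    have h2 := hD'.2.2.1 _ _ (hD.2.2.1 d v hv)
    rw [show dD + (dD' + d) = dD + dD' + d from (add_assoc _ _ _).symm] at h1
    rw [show dD' + (dD + d) = dD + dD' + d by ring] at h2
    exact Submodule.sub_mem _ h1 (Submodule.smul_mem _ _ h2)
  · exact fun d x hx => leibniz_sComm h hD hD' d x hx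
  · funext v
    simp only [sComm]
    rw [mul_comm dD' dD, smul_sub, smul_smul, sign_sq, one_smul, neg_sub]
  · funext v
    simp only [sComm, Dsub, D'sub, hD.1.map_smul, hD'.1.map_smul, hD''.1.map_smul, D''sub, smul_sub, smul_smul]
    rw [show dD * (dD' + dD'') = dD*dD' + dD*dD'' by ring,
      show (dD+dD')*dD'' = dD*dD'' + dD'*dD'' by ring,
      show dD' * (dD+dD'') = dD*dD' + dD'*dD'' by ring,
      sign_add, sign_add, sign_add]
    match_scalars <;> (first | ring1 | (ring_nf; simp only [sign_two, mul_one, one_mul]; try ring1))
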